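/- Let ℓ₁, …, ℓₙ, and ℓ_a, ℓ_b be nonnegative reals and k ∈ [n] an index with Σ_{i<k} ℓ_i + ℓ_a = 1/2 and Σ_{i>k} ℓ_i + ℓ_b = 1/2. Let p₁, …, pₙ ∈ [0,1]. If Σ_{i<k} p_i ℓ_i + Σ_{i>k} (1−p_i) ℓ_i + p_k ℓ_a + (1−p_k) ℓ_b ≥ 3/4, then there exist indices i < j with |p_i − p_j| ≥ 1/2. -/

import Mathlib

open Finset

/-- If the weighted accuracy expression is at least `3/4`, where the weights on the
two sides of the threshold bucket `k` each total `1/2`, then two of the values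
`p i` must be at distance at least `1/2`. -/
theorem accuracy_forces_gap (n k : ℕ) (hk : k ∈ Finset.Icc 1 n)
    (ℓ : ℕ → ℝ) (ℓa ℓb : ℝ)
    (hℓ : ∀ i ∈ Finset.Icc 1 n, 0 ≤ ℓ i) (hℓa : 0 ≤ ℓa) (hℓb : 0 ≤ ℓb)
    (hleft : (∑ i ∈ Finset.Ico 1 k, ℓ i) + ℓa = 1 / 2)
    (hright : (∑ i ∈ Finset.Ioc k n, ℓ i) + ℓb = 1 / 2)
    (p : ℕ → ℝ) (hp : ∀ i ∈ Finset.Icc 1 n, p i ∈ Set.Icc (0 : ℝ) 1)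
    (hacc : (∑ i ∈ Finset.Ico 1 k, p i * ℓ i) +
        (∑ i ∈ Finset.Ioc k n, (1 - p i) * ℓ i) +
        p k * ℓa + (1 - p k) * ℓb ≥ 3 / 4) :
    ∃ i j, i ∈ Finset.Icc 1 n ∧ j ∈ Finset.Icc 1 n ∧ i < j ∧
      |p i - p j| ≥ 1 / 2 := by
  rw [Finset.mem_Icc] at hk
  obtain ⟨hk1, hkn⟩ := hk
  have hSne : (Finset.Icc 1 k).Nonempty := ⟨1, Finset.mem_Icc.2 ⟨le_refl 1, hk1⟩⟩
  have hTne : (Finset.Icc k n).Nonempty := ⟨k, Finset.mem_Icc.2 ⟨le_refl k, hkn⟩⟩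
  obtain ⟨i, hiS, hiM⟩ := Finset.exists_max_image (Finset.Icc 1 k) p hSne
  obtain ⟨j, hjT, hjm⟩ := Finset.exists_min_image (Finset.Icc k n) p hTne
  rw [Finset.mem_Icc] at hiS hjT
  have hiN : i ∈ Finset.Icc 1 n := Finset.mem_Icc.2 ⟨hiS.1, le_trans hiS.2 hkn⟩
  have hjN : j ∈ Finset.Icc 1 n := Finset.mem_Icc.2 ⟨le_trans hk1 hjT.1, hjT.2⟩
  -- left bound
  have hL : (∑ x ∈ Finset.Ico 1 k, p x * ℓ x) + p k * ℓa ≤ p i * (1 / 2) := by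
    have h1 : (∑ x ∈ Finset.Ico 1 k, p x * ℓ x) ≤ ∑ x ∈ Finset.Ico 1 k, p i * ℓ x := by
      apply Finset.sum_le_sum
      intro x hx
      rw [Finset.mem_Ico] at hx
      have hxn : x ∈ Finset.Icc 1 n := Finset.mem_Icc.2 ⟨hx.1, le_trans (le_of_lt hx.2) hkn⟩
      exact mul_le_mul_of_nonneg_right (hiM x (Finset.mem_Icc.2 ⟨hx.1, le_of_lt hx.2⟩)) (hℓ x hxn)
    have h2 : p k * ℓa ≤ p i * ℓa :=
      mul_le_mul_of_nonneg_right (hiM k (Finset.mem_Icc.2 ⟨hk1, le_refl k⟩)) hℓa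
    calc (∑ x ∈ Finset.Ico 1 k, p x * ℓ x) + p k * ℓa
        ≤ (∑ x ∈ Finset.Ico 1 k, p i * ℓ x) + p i * ℓa := add_le_add h1 h2
      _ = p i * ((∑ x ∈ Finset.Ico 1 k, ℓ x) + ℓa) := by rw [← Finset.mul_sum, mul_add]
      _ = p i * (1 / 2) := by rw [hleft]
  -- right bound
  have hR : (∑ x ∈ Finset.Ioc k n, (1 - p x) * ℓ x) + (1 - p k) * ℓb ≤ (1 - p j) * (1 / 2) := by
    have h1 : (∑ x ∈ Finset.Ioc k n, (1 - p x) * ℓ x)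
        ≤ ∑ x ∈ Finset.Ioc k n, (1 - p j) * ℓ x := by
      apply Finset.sum_le_sum
      intro x hx
      rw [Finset.mem_Ioc] at hx
      have hxn : x ∈ Finset.Icc 1 n := Finset.mem_Icc.2 ⟨le_trans hk1 (le_of_lt hx.1), hx.2⟩
      have : p j ≤ p x := hjm x (Finset.mem_Icc.2 ⟨le_of_lt hx.1, hx.2⟩)
      exact mul_le_mul_of_nonneg_right (by linarith) (hℓ x hxn)
    have h2 : (1 - p k) * ℓb ≤ (1 - p j) * ℓb := by
      have : p j ≤ p k := hjm k (Finset.mem_Icc.2 ⟨le_refl k, hkn⟩)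
      exact mul_le_mul_of_nonneg_right (by linarith) hℓb
    calc (∑ x ∈ Finset.Ioc k n, (1 - p x) * ℓ x) + (1 - p k) * ℓb
        ≤ (∑ x ∈ Finset.Ioc k n, (1 - p j) * ℓ x) + (1 - p j) * ℓb := add_le_add h1 h2
      _ = (1 - p j) * ((∑ x ∈ Finset.Ioc k n, ℓ x) + ℓb) := by rw [← Finset.mul_sum, mul_add]
      _ = (1 - p j) * (1 / 2) := by rw [hright]
  have hgap : p i - p j ≥ 1 / 2 := by linarith
  have hij : i < j := by
    rcases lt_or_eq_of_le (le_trans hiS.2 hjT.1) with h | h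
    · exact h
    · exfalso; rw [h] at hgap; linarith
  exact ⟨i, j, hiN, hjN, hij, le_trans hgap (le_abs_self _)⟩
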